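/- For every integer n ≥ 1, the sum over all marked permutations (π,M) of {1,…,n} of x^{asc(π)} (−1)^{|M|} equals the constant polynomial 1 in ℤ[x]. -/

import Mathlib

open Finset

section Defs

variable {m : ℕ} {α : Type*}

def lrminFilter [LinearOrder α] (f : Fin m → α) : Finset (Fin m) :=
  univ.filter fun i => ∀ j, j < i → f i < f j

def lrminCount [LinearOrder α] (f : Fin m → α) : ℕ :=
  (lrminFilter f).card

def lrminSet [LinearOrder α] [DecidableEq α] (f : Fin m → α) : Finset α :=
  (lrminFilter f).image f

def ascFilter [LinearOrder α] (f : Fin m → α) : Finset (Fin m) :=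
  univ.filter fun i => ∃ j : Fin m, (j : ℕ) + 1 = (i : ℕ) ∧ f j < f i

def ascCount [LinearOrder α] (f : Fin m → α) : ℕ :=
  (ascFilter f).card

def ascSet [LinearOrder α] [DecidableEq α] (f : Fin m → α) : Finset α :=
  (ascFilter f).image f

def apFilter [LinearOrder α] (f : Fin m → α) : Finset (Fin m) :=
  univ.filter fun i =>
    ∃ j k : Fin m, (j : ℕ) + 1 = (i : ℕ) ∧ (i : ℕ) + 1 = (k : ℕ) ∧ f j < f i ∧ f i = f k

def apCount [LinearOrder α] (f : Fin m → α) : ℕ := (apFilter f).card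

def apSet [LinearOrder α] [DecidableEq α] (f : Fin m → α) : Finset α := (apFilter f).image f

def evenFilter [DecidableEq α] (f : Fin m → α) : Finset (Fin m) :=
  univ.filter fun p => (p : ℕ) % 2 = 1 ∧ ∀ q, q < p → f q ≠ f p

def evenCount [DecidableEq α] (f : Fin m → α) : ℕ := (evenFilter f).card

def evenSet [DecidableEq α] (f : Fin m → α) : Finset α := (evenFilter f).image f

def desrlminCount [LinearOrder α] (f : Fin m → α) : ℕ :=
  (univ.filter fun i : Fin m =>
    (∃ j : Fin m, (j : ℕ) + 1 = (i : ℕ) ∧ f i < f j) ∨ ∀ j, i < j → f i < f j).card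

def isLRminPos [LinearOrder α] (f : Fin m → α) (i : Fin m) : Prop :=
  ∀ j, j < i → f i < f j

instance [LinearOrder α] (f : Fin m → α) : DecidablePred (isLRminPos f) := fun i => by
  unfold isLRminPos; infer_instance

def bk2Count [LinearOrder α] (f : Fin m → α) : ℕ :=
  (univ.filter fun i : Fin m =>
    isLRminPos f i ∧ (i : ℕ) + 1 < m ∧
      (∀ j : Fin m, (j : ℕ) = (i : ℕ) + 1 → ¬ isLRminPos f j) ∧
      (∀ j : Fin m, (j : ℕ) = (i : ℕ) + 2 → isLRminPos f j)).card

end Defs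

def IsStirling (n : ℕ) (f : Fin (2 * n) → Fin n) : Prop :=
  (∀ k : Fin n, (univ.filter fun p => f p = k).card = 2) ∧
    ∀ p q r : Fin (2 * n), p < q → q < r → f p = f r → f p < f q

instance (n : ℕ) : DecidablePred (IsStirling n) := fun f => by
  unfold IsStirling; infer_instance

def stirlingFinset (n : ℕ) : Finset (Fin (2 * n) → Fin n) :=
  univ.filter (IsStirling n)

def markedPerms (n : ℕ) : Finset (Equiv.Perm (Fin n) × Finset (Fin n)) :=
  univ.filter fun pm => ∀ v ∈ pm.2, v ∉ lrminSet (⇑pm.1)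

-- auxiliary lemmas
lemma anti_eq_rev {n : ℕ} (π : Equiv.Perm (Fin n)) (h : ∀ i j : Fin n, j < i → π i < π j) :
    π = Fin.revPerm := by
  have hm : StrictMono (⇑π ∘ Fin.rev) := by
    intro a b hab
    exact h _ _ (by simpa using Fin.rev_lt_rev.mpr hab)
  have h2 : StrictMono (id : Fin n → Fin n) := strictMono_id
  have hr : Set.range (⇑π ∘ Fin.rev) = Set.range (id : Fin n → Fin n) := by
    simp [Set.range_comp, Fin.rev_surjective.range_eq, π.surjective.range_eq]
  have h3 := (hm.range_inj h2).mp hr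
  apply Equiv.ext
  intro i
  have := congrFun h3 i.rev
  simpa using this

lemma lrmin_univ {n : ℕ} (π : Equiv.Perm (Fin n)) (h : lrminSet ⇑π = univ) :
    π = Fin.revPerm := by
  apply anti_eq_rev
  have hcard : (lrminFilter ⇑π).card = n := by
    have : (lrminSet ⇑π).card = n := by rw [h]; simp
    rw [lrminSet, Finset.card_image_of_injective _ π.injective] at this
    exact this
  have hf : lrminFilter ⇑π = univ := by
    apply Finset.eq_univ_of_card
    simpa using hcard
  intro i j hji
  have : i ∈ lrminFilter ⇑π := hf ▸ Finset.mem_univ i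
  rw [lrminFilter, Finset.mem_filter] at this
  exact this.2 j hji

lemma rev_lrmin {n : ℕ} : lrminSet (⇑(Fin.revPerm : Equiv.Perm (Fin n))) = univ := by
  have : lrminFilter (⇑(Fin.revPerm : Equiv.Perm (Fin n))) = univ := by
    apply Finset.eq_univ_of_forall
    intro i
    rw [lrminFilter, Finset.mem_filter]
    refine ⟨Finset.mem_univ i, fun j hji => ?_⟩
    simpa using Fin.rev_lt_rev.mpr hji
  rw [lrminSet, this]
  exact Finset.image_univ_of_surjective Fin.rev_surjective

lemma rev_asc {n : ℕ} : ascCount (⇑(Fin.revPerm : Equiv.Perm (Fin n))) = 0 := by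
  rw [ascCount, Finset.card_eq_zero, ascFilter, Finset.filter_eq_empty_iff]
  rintro i - ⟨j, hj, hlt⟩
  have : j < i := by omega
  exact absurd hlt (by simpa using (Fin.rev_lt_rev.mpr this).not_gt.imp id)

/-- sign-balance over marked permutations. -/
theorem stmt_2 (n : ℕ) (hn : 1 ≤ n) :
    ∑ pm ∈ markedPerms n,
        (Polynomial.X : Polynomial ℤ) ^ ascCount ⇑pm.1 * (-1) ^ pm.2.card = 1 := by
  classical
  rw [markedPerms, Finset.sum_filter, Fintype.sum_prod_type]
  have step : ∀ π : Equiv.Perm (Fin n),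
      (∑ M : Finset (Fin n), if (∀ v ∈ M, v ∉ lrminSet ⇑π) then
        (Polynomial.X : Polynomial ℤ) ^ ascCount ⇑π * (-1) ^ M.card else 0)
      = if π = Fin.revPerm then 1 else 0 := by
    intro π
    have hfil : (univ.filter fun M : Finset (Fin n) => ∀ v ∈ M, v ∉ lrminSet ⇑π)
        = ((lrminSet ⇑π)ᶜ).powerset := by
      ext M
      simp [Finset.subset_iff]
    rw [← Finset.sum_filter, hfil]
    have : ∀ M ∈ ((lrminSet ⇑π)ᶜ).powerset,
        (Polynomial.X : Polynomial ℤ) ^ ascCount ⇑π * (-1) ^ M.card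
        = (Polynomial.X : Polynomial ℤ) ^ ascCount ⇑π * ((-1) ^ M.card) := fun _ _ => rfl
    rw [← Finset.mul_sum]
    have hsum : (∑ M ∈ ((lrminSet ⇑π)ᶜ).powerset, ((-1 : Polynomial ℤ)) ^ M.card)
        = if (lrminSet ⇑π)ᶜ = ∅ then 1 else 0 := by
      have h := Finset.sum_powerset_neg_one_pow_card (x := (lrminSet ⇑π)ᶜ)
      have h2 := congrArg (fun z : ℤ => (z : Polynomial ℤ)) h
      simpa [apply_ite (fun z : ℤ => (z : Polynomial ℤ))] using h2
    rw [hsum]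
    by_cases hc : (lrminSet ⇑π)ᶜ = ∅
    · have hu : lrminSet ⇑π = univ := by
        rwa [Finset.compl_eq_empty_iff] at hc
      have hπ : π = Fin.revPerm := lrmin_univ π hu
      rw [if_pos hc, if_pos hπ, hπ, rev_asc]
      simp
    · have hπ : ¬ π = Fin.revPerm := by
        intro h; apply hc
        rw [h, rev_lrmin]; simp
      rw [if_neg hc, if_neg hπ, mul_zero]
  rw [Finset.sum_congr rfl (fun π _ => step π)]
  simp
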